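/- The function Φ₁ is differentiable on the open interval (0,π), and for every θ¹ ∈ (0,π) its derivative satisfies Φ₁′(θ¹) = ( sin θ¹ / (2π sin(Φ₁(θ¹))) ) · ∫₀^{2π} λ(θ¹,τ) dτ, and this derivative is strictly positive on (0,π). -/

import Mathlib

open Real Set MeasureTheory intervalIntegral

/-- `Φ₁` is differentiable on `(0,π)`, and for every `θ¹ ∈ (0,π)`,
`Φ₁′(θ¹) = (sin θ¹ / (2π sin(Φ₁(θ¹)))) · ∫₀^{2π} λ(θ¹,τ) dτ`,
and this derivative is strictly positive on `(0,π)`. -/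
theorem stmt_1
    (lam : ℝ → ℝ → ℝ)
    (hcont : ContinuousOn (fun p : ℝ × ℝ => lam p.1 p.2)
      (Set.Icc (0:ℝ) π ×ˢ Set.Icc (0:ℝ) (2*π)))
    (hpos : ∀ p ∈ Set.Icc (0:ℝ) π ×ˢ Set.Icc (0:ℝ) (2*π), 0 < lam p.1 p.2)
    (hnorm : (∫ σ in (0:ℝ)..π, ∫ τ in (0:ℝ)..(2*π), lam σ τ * Real.sin σ) = 4*π)
    (Φ₁ : ℝ → ℝ)
    (hΦ₁ : ∀ θ, Φ₁ θ = Real.arccos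
      (1 - (1/(2*π)) * ∫ σ in (0:ℝ)..θ, ∫ τ in (0:ℝ)..(2*π), lam σ τ * Real.sin σ)) :
    ∀ θ ∈ Set.Ioo (0:ℝ) π,
      HasDerivAt Φ₁
        (Real.sin θ / (2*π*Real.sin (Φ₁ θ)) * ∫ τ in (0:ℝ)..(2*π), lam θ τ) θ ∧
      0 < Real.sin θ / (2*π*Real.sin (Φ₁ θ)) * ∫ τ in (0:ℝ)..(2*π), lam θ τ := by
  have pi_pos := Real.pi_pos
  have two_pi_pos : (0:ℝ) < 2*π := by linarith
  -- continuity of slices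
  have hslice : ∀ σ ∈ Icc (0:ℝ) π, ContinuousOn (fun τ => lam σ τ) (Icc (0:ℝ) (2*π)) := by
    intro σ hσ
    have hmap : MapsTo (fun τ : ℝ => ((σ, τ) : ℝ × ℝ)) (Icc (0:ℝ) (2*π))
        (Icc (0:ℝ) π ×ˢ Icc (0:ℝ) (2*π)) := fun τ hτ => ⟨hσ, hτ⟩
    exact hcont.comp (Continuous.continuousOn (by continuity)) hmap
  have hslice_int : ∀ σ ∈ Icc (0:ℝ) π,
      IntervalIntegrable (fun τ => lam σ τ * Real.sin σ) volume 0 (2*π) := by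
    intro σ hσ
    apply ContinuousOn.intervalIntegrable
    rw [uIcc_of_le two_pi_pos.le]
    exact (hslice σ hσ).mul continuousOn_const
  have hslice_int' : ∀ σ ∈ Icc (0:ℝ) π,
      IntervalIntegrable (fun τ => lam σ τ) volume 0 (2*π) := by
    intro σ hσ
    apply ContinuousOn.intervalIntegrable
    rw [uIcc_of_le two_pi_pos.le]
    exact hslice σ hσ
  set G : ℝ → ℝ := fun σ => ∫ τ in (0:ℝ)..(2*π), lam σ τ * Real.sin σ with hGdef
  -- positivity of the inner integrals
  have hlam_int_pos : ∀ σ ∈ Ioo (0:ℝ) π, 0 < ∫ τ in (0:ℝ)..(2*π), lam σ τ := by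
    intro σ hσ
    refine intervalIntegral_pos_of_pos_on (hslice_int' σ (Ioo_subset_Icc_self hσ)) ?_ two_pi_pos
    intro τ hτ
    exact hpos (σ, τ) ⟨Ioo_subset_Icc_self hσ, Ioo_subset_Icc_self hτ⟩
  have hGpos : ∀ σ ∈ Ioo (0:ℝ) π, 0 < G σ := by
    intro σ hσ
    have hs : 0 < Real.sin σ := Real.sin_pos_of_pos_of_lt_pi hσ.1 hσ.2
    have : G σ = (∫ τ in (0:ℝ)..(2*π), lam σ τ) * Real.sin σ := by
      simp [hGdef, intervalIntegral.integral_mul_const]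
    rw [this]
    exact mul_pos (hlam_int_pos σ hσ) hs
  -- continuity of G on [0, π]
  obtain ⟨C, hC⟩ : ∃ C, ∀ p ∈ Icc (0:ℝ) π ×ˢ Icc (0:ℝ) (2*π), ‖lam p.1 p.2‖ ≤ C :=
    (IsCompact.exists_bound_of_continuousOn (isCompact_Icc.prod isCompact_Icc) hcont)
  have hGcont : ContinuousOn G (Icc (0:ℝ) π) := by
    intro σ₀ hσ₀
    apply intervalIntegral.continuousWithinAt_of_dominated_interval
      (bound := fun _ => C) (s := Icc (0:ℝ) π)
    · filter_upwards [self_mem_nhdsWithin] with σ hσ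
      exact ContinuousOn.aestronglyMeasurable
        (((hslice σ hσ).mul continuousOn_const).mono
          (by rw [Set.uIoc_of_le two_pi_pos.le]; exact Set.Ioc_subset_Icc_self))
        measurableSet_uIoc
    · filter_upwards [self_mem_nhdsWithin] with σ hσ
      filter_upwards with τ hτ
      rw [uIoc_of_le two_pi_pos.le] at hτ
      have h1 : ‖lam σ τ‖ ≤ C := hC (σ, τ) ⟨hσ, Ioc_subset_Icc_self hτ⟩
      have h2 : ‖Real.sin σ‖ ≤ 1 := by
        rw [Real.norm_eq_abs]; exact Real.abs_sin_le_one σ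
      calc ‖lam σ τ * Real.sin σ‖ = ‖lam σ τ‖ * ‖Real.sin σ‖ := norm_mul _ _
        _ ≤ C * 1 := by
            apply mul_le_mul h1 h2 (norm_nonneg _)
            exact le_trans (norm_nonneg _) h1
        _ = C := mul_one C
    · exact intervalIntegrable_const
    · filter_upwards with τ hτ
      rw [uIoc_of_le two_pi_pos.le] at hτ
      have hmap : MapsTo (fun σ : ℝ => ((σ, τ) : ℝ × ℝ)) (Icc (0:ℝ) π)
          (Icc (0:ℝ) π ×ˢ Icc (0:ℝ) (2*π)) := fun σ hσ => ⟨hσ, Ioc_subset_Icc_self hτ⟩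
      have hc : ContinuousOn (fun σ => lam σ τ * Real.sin σ) (Icc (0:ℝ) π) :=
        (hcont.comp (Continuous.continuousOn (by continuity)) hmap).mul
          (Real.continuous_sin.continuousOn)
      exact hc σ₀ hσ₀
  have hGint : ∀ a b, a ∈ Icc (0:ℝ) π → b ∈ Icc (0:ℝ) π → IntervalIntegrable G volume a b := by
    intro a b ha hb
    apply ContinuousOn.intervalIntegrable
    exact hGcont.mono (uIcc_subset_Icc ha hb)
  set F : ℝ → ℝ := fun θ => ∫ σ in (0:ℝ)..θ, G σ with hFdef
  intro θ hθ
  have hθI : θ ∈ Icc (0:ℝ) π := Ioo_subset_Icc_self hθ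
  have h0I : (0:ℝ) ∈ Icc (0:ℝ) π := ⟨le_refl _, pi_pos.le⟩
  have hπI : π ∈ Icc (0:ℝ) π := ⟨pi_pos.le, le_refl _⟩
  -- bounds on F θ
  have hFθpos : 0 < F θ :=
    intervalIntegral_pos_of_pos_on (hGint 0 θ h0I hθI)
      (fun x hx => hGpos x ⟨hx.1, hx.2.trans hθ.2⟩) hθ.1
  have hsplit : F θ + ∫ σ in θ..π, G σ = (4:ℝ)*π := by
    rw [hFdef]
    rw [intervalIntegral.integral_add_adjacent_intervals (hGint 0 θ h0I hθI) (hGint θ π hθI hπI)]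
    exact hnorm
  have htail : 0 < ∫ σ in θ..π, G σ :=
    intervalIntegral_pos_of_pos_on (hGint θ π hθI hπI)
      (fun x hx => hGpos x ⟨hθ.1.trans hx.1, hx.2⟩) hθ.2
  have hFθlt : F θ < 4*π := by linarith
  set u : ℝ := 1 - (1/(2*π)) * F θ with hudef
  have hu1 : u < 1 := by
    have h : 0 < (1/(2*π)) * F θ := mul_pos (by positivity) hFθpos
    simp only [hudef]
    linarith
  have hu2 : -1 < u := by
    have h1 : (1/(2*π)) * F θ < (1/(2*π)) * (4*π) := by
      apply mul_lt_mul_of_pos_left hFθlt (by positivity)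
    have h2 : (1/(2*π)) * (4*π) = 2 := by field_simp; ring
    rw [h2] at h1
    simp only [hudef]
    linarith
  -- sin (Φ₁ θ) = sqrt (1 - u^2) > 0
  have hΦval : Φ₁ θ = Real.arccos u := hΦ₁ θ
  have hsin_eq : Real.sin (Φ₁ θ) = Real.sqrt (1 - u^2) := by
    rw [hΦval, Real.sin_arccos]
  have h1u : 0 < 1 - u^2 := by nlinarith
  have hsqrt_pos : 0 < Real.sqrt (1 - u^2) := Real.sqrt_pos.mpr h1u
  have hsin_pos : 0 < Real.sin (Φ₁ θ) := by rw [hsin_eq]; exact hsqrt_pos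
  -- FTC: F has derivative G θ at θ
  have hF_deriv : HasDerivAt F (G θ) θ := by
    apply intervalIntegral.integral_hasDerivAt_right (hGint 0 θ h0I hθI)
    · exact ⟨Icc (0:ℝ) π, Icc_mem_nhds hθ.1 hθ.2,
        hGcont.aestronglyMeasurable measurableSet_Icc⟩
    · exact (hGcont θ hθI).continuousAt (Icc_mem_nhds hθ.1 hθ.2)
  -- chain rule
  have hinner : HasDerivAt (fun x => 1 - (1/(2*π)) * F x) (-((1/(2*π)) * G θ)) θ := by
    exact (hF_deriv.const_mul (1/(2*π))).const_sub 1
  have harc : HasDerivAt Real.arccos (-(1 / Real.sqrt (1 - u^2))) u :=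
    Real.hasDerivAt_arccos (ne_of_gt hu2) (ne_of_lt hu1)
  have hcomp := HasDerivAt.comp θ harc hinner
  have hΦeq : Φ₁ = fun x => Real.arccos (1 - (1/(2*π)) * F x) := funext fun x => hΦ₁ x
  have hderiv : HasDerivAt Φ₁
      ((-(1 / Real.sqrt (1 - u^2))) * (-((1/(2*π)) * G θ))) θ := by
    rw [hΦeq]; exact hcomp
  have hGval : G θ = (∫ τ in (0:ℝ)..(2*π), lam θ τ) * Real.sin θ := by
    simp [hGdef, intervalIntegral.integral_mul_const]
  have hval_eq : (-(1 / Real.sqrt (1 - u^2))) * (-((1/(2*π)) * G θ)) =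
      Real.sin θ / (2*π*Real.sin (Φ₁ θ)) * ∫ τ in (0:ℝ)..(2*π), lam θ τ := by
    rw [hGval, hsin_eq]
    field_simp
  constructor
  · rw [← hval_eq]; exact hderiv
  · rw [← hval_eq]
    have hsinθ : 0 < Real.sin θ := Real.sin_pos_of_pos_of_lt_pi hθ.1 hθ.2
    have hGθ : 0 < G θ := hGpos θ hθ
    have : (-(1 / Real.sqrt (1 - u^2))) * (-((1/(2*π)) * G θ)) =
        (1 / Real.sqrt (1 - u^2)) * ((1/(2*π)) * G θ) := by ring
    rw [this]
    positivity
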